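/- arXiv:1307.2381 — 2 statements merged into one kernel-verified Lean document; each statement's English description precedes it below -/
import Mathlib

section
/- Fix positive integers n, m, p, n_E, n_F, n_G, n_H, M, K. For each μ ∈ {1,…,M} let A(μ) ∈ ℝ^{n×n}, B(μ) ∈ ℝ^{n×m}, C(μ) ∈ ℝ^{p×n}, E(μ) ∈ ℝ^{n×n_E}, F(μ) ∈ ℝ^{n×n_F}, G(μ) ∈ ℝ^{n×n_G}, H(μ) ∈ ℝ^{n_H×n}, let R̃(μ) ∈ ℝ^{m×m} be symmetric positive definite, and let β̄(μ) > 0. Let q ∈ ℝ^{M×M} with q_{μν} ≥ 0 whenever ν ≠ μ, and let γ > 0, τ̄ > 0, θ̄ > 0 and s_1,…,s_K > 0; set σ = τ̄^{-1} + Σ_{k=1}^K s_k^{-1}. Suppose that for each μ there is a symmetric positive definite X(μ) ∈ ℝ^{n×n} such that the symmetric block matrix [[Υ11(μ), Υ12(μ), Υ13(μ)],[Υ12(μ)ᵀ, Υ22(μ), 0],[Υ13(μ)ᵀ, 0, Υ33(μ)]] is negative definite, where Υ11(μ) = X(μ)A(μ)ᵀ + A(μ)X(μ) + θ̄E(μ)E(μ)ᵀ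 + τ̄F(μ)F(μ)ᵀ + γ^{-2}G(μ)G(μ)ᵀ − B(μ)R̃(μ)^{-1}B(μ)ᵀ + q_{μμ}X(μ); Υ12(μ) = X(μ)·[C(μ)ᵀ, I_n, H(μ)ᵀ, …, H(μ)ᵀ] with K+1 copies of H(μ)ᵀ; Υ22(μ) = −diag[I_p, β̄(μ)·I_n, τ̄·I_{n_H}, s_1·I_{n_H}, …, s_K·I_{n_H}]; Υ13(μ) = X(μ)·[√q_{μ1}·I_n, …, √q_{μ,μ−1}·I_n, √q_{μ,μ+1}·I_n, …, √q_{μM}·I_n]; Υ33(μ) = −diag[X(1), …, X(μ−1), X(μ+1), …, X(M)]. Then, setting X̄(μ) = X(μ)^{-1} and K̃(μ) = −R̃(μ)^{-1}B(μ)ᵀX̄(μ), for every μ the symmetric matrix (A(μ)+B(μ)K̃(μ))ᵀX̄(μ) + X̄(μ)(A(μ)+B(μ)K̃(μ)) + C(μ)ᵀC(μ) + β̄(μ)^{-1}·I_n + Σ_{ν=1}^M q_{μν}X̄(ν) + σ·H(μ)ᵀH(μ) + X̄(μ)[θ̄E(μ)E(μ)ᵀ + τ̄F(μ)F(μ)ᵀ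 + γ^{-2}G(μ)G(μ)ᵀ]X̄(μ) + K̃(μ)ᵀR̃(μ)K̃(μ) is negative definite. -/
open Matrix

lemma aux_posdef_conj {k n : Type*} [Fintype k] [Fintype n]
    (N : Matrix k k ℝ) (hN : N.PosDef) (L : Matrix k n ℝ)
    (hL : ∀ x : n → ℝ, x ≠ 0 → L.mulVec x ≠ 0) : (Lᵀ * N * L).PosDef := by
  refine posDef_iff_dotProduct_mulVec.mpr ⟨?_, ?_⟩
  · have h1 := hN.1
    unfold Matrix.IsHermitian at *
    rw [conjTranspose_eq_transpose_of_trivial] at *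
    rw [transpose_mul, transpose_mul, transpose_transpose, h1, Matrix.mul_assoc]
  · intro x hx
    have h := (posDef_iff_dotProduct_mulVec.mp hN).2 (hL x hx)
    simpa [star_trivial, dotProduct_mulVec, Matrix.mul_assoc, vecMul_transpose,
      ← mulVec_mulVec] using h

lemma aux_sum_ne {M : ℕ} {α : Type*} [AddCommMonoid α] (μ : Fin M) (f : Fin M → α) :
    ∑ ν : Fin M, f ν = f μ + ∑ ν : {ν : Fin M // ν ≠ μ}, f ν.1 := by
  have h2 : ∑ ν : {ν : Fin M // ν ≠ μ}, f ν.1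
      = ∑ ν ∈ Finset.univ.filter (· ≠ μ), f ν :=
    (Finset.sum_subtype _ (by simp) _).symm
  rw [h2, ← Finset.sum_filter_add_sum_filter_not Finset.univ (· ≠ μ) f, add_comm]
  congr 1
  simp [Finset.filter_eq']

lemma aux_fromRows_add {m₁ m₂ n : Type*} (A C : Matrix m₁ n ℝ) (B D : Matrix m₂ n ℝ) :
    fromRows A B + fromRows C D = fromRows (A + C) (B + D) := by
  ext (i | i) j <;> simp


/-- Deterministic matrix core of the paper's Theorem 1: the LMI condition (9)
(with the rank constraints eliminated by `X̄(μ) = X(μ)⁻¹`) implies the coupled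
Riccati-type inequality (16) for the gains `K̃(μ) = −R̃(μ)⁻¹B(μ)ᵀX̄(μ)`. -/
theorem stmt_10
    (n m p nE nF nG nH M K : ℕ)
    (hn : 0 < n) (hm : 0 < m) (hp : 0 < p) (hnE : 0 < nE) (hnF : 0 < nF)
    (hnG : 0 < nG) (hnH : 0 < nH) (hM : 0 < M) (hK : 0 < K)
    (A : Fin M → Matrix (Fin n) (Fin n) ℝ)
    (B : Fin M → Matrix (Fin n) (Fin m) ℝ)
    (C : Fin M → Matrix (Fin p) (Fin n) ℝ)
    (E : Fin M → Matrix (Fin n) (Fin nE) ℝ)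
    (F : Fin M → Matrix (Fin n) (Fin nF) ℝ)
    (G : Fin M → Matrix (Fin n) (Fin nG) ℝ)
    (H : Fin M → Matrix (Fin nH) (Fin n) ℝ)
    (Rt : Fin M → Matrix (Fin m) (Fin m) ℝ)
    (hRt : ∀ μ, (Rt μ).PosDef)
    (βbar : Fin M → ℝ) (hβbar : ∀ μ, 0 < βbar μ)
    (q : Matrix (Fin M) (Fin M) ℝ)
    (hq : ∀ μ ν : Fin M, ν ≠ μ → 0 ≤ q μ ν)
    (γ τbar θbar : ℝ) (hγ : 0 < γ) (hτbar : 0 < τbar) (hθbar : 0 < θbar)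
    (s : Fin K → ℝ) (hs : ∀ k, 0 < s k)
    (σ : ℝ) (hσ : σ = τbar⁻¹ + ∑ k, (s k)⁻¹)
    (X : Fin M → Matrix (Fin n) (Fin n) ℝ)
    (hX : ∀ μ, (X μ).PosDef)
    -- the blocks of the LMI (9)
    (Y11 : Fin M → Matrix (Fin n) (Fin n) ℝ)
    (hY11 : ∀ μ, Y11 μ =
      X μ * (A μ)ᵀ + A μ * X μ + θbar • (E μ * (E μ)ᵀ) + τbar • (F μ * (F μ)ᵀ)
        + (γ ^ 2)⁻¹ • (G μ * (G μ)ᵀ) - B μ * (Rt μ)⁻¹ * (B μ)ᵀ + q μ μ • X μ)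
    (Y12 : Fin M →
      Matrix (Fin n) (Fin p ⊕ (Fin n ⊕ Fin (K + 1) × Fin nH)) ℝ)
    (hY12 : ∀ μ, Y12 μ =
      X μ * Matrix.fromCols (C μ)ᵀ
        (Matrix.fromCols (1 : Matrix (Fin n) (Fin n) ℝ)
          (Matrix.of fun (i : Fin n) (kj : Fin (K + 1) × Fin nH) =>
            (H μ)ᵀ i kj.2)))
    (Y22 : Fin M →
      Matrix (Fin p ⊕ (Fin n ⊕ Fin (K + 1) × Fin nH))
        (Fin p ⊕ (Fin n ⊕ Fin (K + 1) × Fin nH)) ℝ)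
    (hY22 : ∀ μ, Y22 μ =
      -(Matrix.fromBlocks (1 : Matrix (Fin p) (Fin p) ℝ) 0 0
        (Matrix.fromBlocks (βbar μ • (1 : Matrix (Fin n) (Fin n) ℝ)) 0 0
          (Matrix.diagonal fun kj : Fin (K + 1) × Fin nH =>
            Fin.cons (α := fun _ => ℝ) τbar s kj.1))))
    (Y13 : ∀ μ : Fin M, Matrix (Fin n) ({ν : Fin M // ν ≠ μ} × Fin n) ℝ)
    (hY13 : ∀ μ, Y13 μ =
      X μ * Matrix.of (fun (i : Fin n) (νj : {ν : Fin M // ν ≠ μ} × Fin n) =>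
        Real.sqrt (q μ νj.1.1) * (if i = νj.2 then (1 : ℝ) else 0)))
    (Y33 : ∀ μ : Fin M,
      Matrix ({ν : Fin M // ν ≠ μ} × Fin n) ({ν : Fin M // ν ≠ μ} × Fin n) ℝ)
    (hY33 : ∀ μ, Y33 μ =
      Matrix.of (fun (a b : {ν : Fin M // ν ≠ μ} × Fin n) =>
        if a.1.1 = b.1.1 then -(X a.1.1 a.2 b.2) else 0))
    -- the LMI (9): the block matrix is negative definite
    (hLMI : ∀ μ : Fin M,
      (-(Matrix.fromBlocks (Y11 μ)
          (Matrix.fromCols (Y12 μ) (Y13 μ))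
          (Matrix.fromRows (Y12 μ)ᵀ (Y13 μ)ᵀ)
          (Matrix.fromBlocks (Y22 μ) 0 0 (Y33 μ)))).PosDef)
    -- the substitutions X̄(μ) = X(μ)⁻¹ and K̃(μ) = −R̃(μ)⁻¹B(μ)ᵀX̄(μ)
    (Xbar : Fin M → Matrix (Fin n) (Fin n) ℝ)
    (hXbar : ∀ μ, Xbar μ = (X μ)⁻¹)
    (Kt : Fin M → Matrix (Fin m) (Fin n) ℝ)
    (hKt : ∀ μ, Kt μ = -((Rt μ)⁻¹ * (B μ)ᵀ * Xbar μ)) :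
    -- the Riccati-type inequality (16)
    ∀ μ : Fin M,
      (-((A μ + B μ * Kt μ)ᵀ * Xbar μ + Xbar μ * (A μ + B μ * Kt μ)
        + (C μ)ᵀ * C μ + (βbar μ)⁻¹ • (1 : Matrix (Fin n) (Fin n) ℝ)
        + (∑ ν : Fin M, q μ ν • Xbar ν) + σ • ((H μ)ᵀ * H μ)
        + Xbar μ * (θbar • (E μ * (E μ)ᵀ) + τbar • (F μ * (F μ)ᵀ)
            + (γ ^ 2)⁻¹ • (G μ * (G μ)ᵀ)) * Xbar μ
        + (Kt μ)ᵀ * Rt μ * Kt μ)).PosDef := by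
  intro μ
  -- basic symmetry / invertibility facts
  have hXsym : ∀ ν, (X ν)ᵀ = X ν := fun ν => by
    have h := (hX ν).1
    rwa [Matrix.IsHermitian, conjTranspose_eq_transpose_of_trivial] at h
  have hXdet : ∀ ν, IsUnit (X ν).det := fun ν => (hX ν).det_pos.ne'.isUnit
  have hPX : ∀ ν, X ν * Xbar ν = 1 := fun ν => by
    rw [hXbar]; exact Matrix.mul_nonsing_inv _ (hXdet ν)
  have hXP : ∀ ν, Xbar ν * X ν = 1 := fun ν => by
    rw [hXbar]; exact Matrix.nonsing_inv_mul _ (hXdet ν)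
  have hXbsym : (Xbar μ)ᵀ = Xbar μ := by
    rw [hXbar, Matrix.transpose_nonsing_inv, hXsym]
  have hRsym : (Rt μ)ᵀ = Rt μ := by
    have h := (hRt μ).1
    rwa [Matrix.IsHermitian, conjTranspose_eq_transpose_of_trivial] at h
  have hRdet : IsUnit (Rt μ).det := (hRt μ).det_pos.ne'.isUnit
  have hRinvsym : ((Rt μ)⁻¹)ᵀ = (Rt μ)⁻¹ := by
    rw [Matrix.transpose_nonsing_inv, hRsym]
  -- the diagonal entries
  set c : Fin (K + 1) → ℝ := Fin.cons (α := fun _ => ℝ) τbar s with hc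
  have hcpos : ∀ k, 0 < c k := by
    intro k
    induction k using Fin.cases with
    | zero => simpa [hc] using hτbar
    | succ i => simpa [hc] using hs i
  have hσc : ∑ k, (c k)⁻¹ = σ := by
    rw [hσ, Fin.sum_univ_succ]
    simp [hc]
  -- the congruence matrix
  set Hplain : Matrix (Fin (K + 1) × Fin nH) (Fin n) ℝ :=
    Matrix.of fun kj j => H μ kj.2 j with hHplain
  set Hs : Matrix (Fin (K + 1) × Fin nH) (Fin n) ℝ :=
    Matrix.of fun kj j => (c kj.1)⁻¹ * H μ kj.2 j with hHs
  set Zmat : Matrix (Fin p ⊕ (Fin n ⊕ Fin (K + 1) × Fin nH)) (Fin n) ℝ :=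
    fromRows (C μ) (fromRows ((βbar μ)⁻¹ • (1 : Matrix (Fin n) (Fin n) ℝ)) Hs) with hZmat
  set Zmat2 : Matrix (Fin p ⊕ (Fin n ⊕ Fin (K + 1) × Fin nH)) (Fin n) ℝ :=
    fromRows (C μ) (fromRows (1 : Matrix (Fin n) (Fin n) ℝ) Hplain) with hZmat2
  set Qmat : Matrix (Fin n) ({ν : Fin M // ν ≠ μ} × Fin n) ℝ :=
    Matrix.of (fun (i : Fin n) (νj : {ν : Fin M // ν ≠ μ} × Fin n) =>
      Real.sqrt (q μ νj.1.1) * (if i = νj.2 then (1 : ℝ) else 0)) with hQmat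
  set Wmat : Matrix ({ν : Fin M // ν ≠ μ} × Fin n) (Fin n) ℝ :=
    Matrix.of (fun (a : {ν : Fin M // ν ≠ μ} × Fin n) (j : Fin n) =>
      Real.sqrt (q μ a.1.1) * Xbar a.1.1 a.2 j) with hWmat
  set L : Matrix ((Fin n) ⊕ ((Fin p ⊕ (Fin n ⊕ Fin (K + 1) × Fin nH)) ⊕
      ({ν : Fin M // ν ≠ μ} × Fin n))) (Fin n) ℝ :=
    fromRows (Xbar μ) (fromRows Zmat Wmat) with hL
  -- the six block products
  have h1 : Y12 μ * Zmat = X μ * ((C μ)ᵀ * C μ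
      + ((βbar μ)⁻¹ • (1 : Matrix (Fin n) (Fin n) ℝ) + σ • ((H μ)ᵀ * H μ))) := by
    rw [hY12, hZmat, Matrix.mul_assoc]
    congr 1
    rw [fromCols_mul_fromRows, fromCols_mul_fromRows, Matrix.one_mul]
    congr 1
    congr 1
    ext i j
    simp only [mul_apply, of_apply, transpose_apply, Matrix.smul_apply, smul_eq_mul,
      Fintype.sum_prod_type, hHs]
    rw [← hσc, Finset.sum_mul]
    refine Finset.sum_congr rfl fun k _ => ?_
    rw [Finset.mul_sum]
    refine Finset.sum_congr rfl fun l _ => ?_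
    ring
  have h2 : Y13 μ * Wmat
      = X μ * (∑ ν : {ν : Fin M // ν ≠ μ}, q μ ν.1 • Xbar ν.1) := by
    rw [hY13, hWmat, Matrix.mul_assoc]
    congr 1
    ext i j
    simp only [mul_apply, of_apply, Fintype.sum_prod_type, Matrix.sum_apply,
      Matrix.smul_apply, smul_eq_mul]
    refine Finset.sum_congr rfl fun ν _ => ?_
    rw [Finset.sum_eq_single i]
    · rw [if_pos rfl, mul_one, ← mul_assoc, Real.mul_self_sqrt (hq μ ν.1 ν.2)]
    · intro l _ hl
      rw [if_neg (Ne.symm hl), mul_zero, zero_mul]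
    · intro hi
      exact absurd (Finset.mem_univ i) hi
  have h3 : (Y12 μ)ᵀ * Xbar μ = Zmat2 := by
    rw [hY12, Matrix.transpose_mul, Matrix.mul_assoc, hXsym μ, hPX μ, Matrix.mul_one,
      transpose_fromCols, transpose_fromCols, Matrix.transpose_one,
      Matrix.transpose_transpose, hZmat2]
    congr 2
  have h4 : Y22 μ * Zmat = -Zmat2 := by
    rw [hY22, hZmat, Matrix.neg_mul, neg_inj, fromBlocks_mul_fromRows,
      fromBlocks_mul_fromRows]
    simp only [Matrix.one_mul, Matrix.zero_mul, add_zero, zero_add]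
    rw [hZmat2]
    have hb : (βbar μ • (1 : Matrix (Fin n) (Fin n) ℝ)) * ((βbar μ)⁻¹ • 1) = 1 := by
      rw [Matrix.smul_mul, Matrix.mul_smul, Matrix.mul_one, smul_smul,
        mul_inv_cancel₀ (hβbar μ).ne', one_smul]
    have hd : (Matrix.diagonal fun kj : Fin (K + 1) × Fin nH => c kj.1) * Hs
        = Hplain := by
      ext kj j
      rw [Matrix.diagonal_mul]
      simp only [hHs, of_apply, hHplain]
      rw [← mul_assoc, mul_inv_cancel₀ (hcpos kj.1).ne', one_mul]
    rw [hb, hd]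
  have h5 : (Y13 μ)ᵀ * Xbar μ = Qmatᵀ := by
    rw [hY13, Matrix.transpose_mul, Matrix.mul_assoc, hXsym μ, hPX μ, Matrix.mul_one, hQmat]
  have h6 : Y33 μ * Wmat = -Qmatᵀ := by
    ext a j
    rw [hY33]
    simp only [mul_apply, of_apply, Fintype.sum_prod_type, Matrix.neg_apply,
      transpose_apply, hWmat, hQmat]
    rw [Finset.sum_eq_single a.1]
    · have hXX : (X a.1.1 * Xbar a.1.1) a.2 j = (1 : Matrix (Fin n) (Fin n) ℝ) a.2 j := by
        rw [hPX]
      rw [Matrix.mul_apply] at hXX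
      have : ∀ l : Fin n, (if (a.1.1 : Fin M) = a.1.1 then -(X a.1.1 a.2 l) else 0)
          * (Real.sqrt (q μ a.1.1) * Xbar a.1.1 l j)
          = -(Real.sqrt (q μ a.1.1) * (X a.1.1 a.2 l * Xbar a.1.1 l j)) := by
        intro l
        rw [if_pos rfl]
        ring
      rw [Finset.sum_congr rfl fun l _ => this l, Finset.sum_neg_distrib,
        ← Finset.mul_sum, hXX, Matrix.one_apply]
      by_cases hja : a.2 = j
      · simp [hja]
      · simp [hja, Ne.symm hja]
    · intro ρ _ hρ
      apply Finset.sum_eq_zero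
      intro l _
      rw [if_neg fun hcon => hρ (Subtype.ext hcon.symm), zero_mul]
    · intro ha
      exact absurd (Finset.mem_univ a.1) ha
  -- assembling the big product
  have hML : (Matrix.fromBlocks (Y11 μ)
        (Matrix.fromCols (Y12 μ) (Y13 μ))
        (Matrix.fromRows (Y12 μ)ᵀ (Y13 μ)ᵀ)
        (Matrix.fromBlocks (Y22 μ) 0 0 (Y33 μ))) * L
      = fromRows (Y11 μ * Xbar μ + X μ * (((C μ)ᵀ * C μ
          + ((βbar μ)⁻¹ • (1 : Matrix (Fin n) (Fin n) ℝ) + σ • ((H μ)ᵀ * H μ)))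
          + (∑ ν : {ν : Fin M // ν ≠ μ}, q μ ν.1 • Xbar ν.1))) 0 := by
    rw [hL, fromBlocks_mul_fromRows, fromCols_mul_fromRows, fromRows_mul,
      fromBlocks_mul_fromRows, h1, h2, h3, h4, h5, h6, Matrix.zero_mul,
      Matrix.zero_mul, add_zero, zero_add, aux_fromRows_add, add_neg_cancel,
      add_neg_cancel, fromRows_zero, ← Matrix.mul_add]
  have hLML : Lᵀ * ((Matrix.fromBlocks (Y11 μ)
        (Matrix.fromCols (Y12 μ) (Y13 μ))
        (Matrix.fromRows (Y12 μ)ᵀ (Y13 μ)ᵀ)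
        (Matrix.fromBlocks (Y22 μ) 0 0 (Y33 μ))) * L)
      = Xbar μ * (Y11 μ * Xbar μ) + (((C μ)ᵀ * C μ
          + ((βbar μ)⁻¹ • (1 : Matrix (Fin n) (Fin n) ℝ) + σ • ((H μ)ᵀ * H μ)))
          + (∑ ν : {ν : Fin M // ν ≠ μ}, q μ ν.1 • Xbar ν.1)) := by
    rw [hML, hL, transpose_fromRows, transpose_fromRows, hXbsym,
      fromCols_mul_fromRows, Matrix.mul_zero, add_zero, Matrix.mul_add]
    congr 1
    rw [← Matrix.mul_assoc, hXP μ, Matrix.one_mul]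
  have hRic : (A μ + B μ * Kt μ)ᵀ * Xbar μ + Xbar μ * (A μ + B μ * Kt μ)
        + (C μ)ᵀ * C μ + (βbar μ)⁻¹ • (1 : Matrix (Fin n) (Fin n) ℝ)
        + (∑ ν : Fin M, q μ ν • Xbar ν) + σ • ((H μ)ᵀ * H μ)
        + Xbar μ * (θbar • (E μ * (E μ)ᵀ) + τbar • (F μ * (F μ)ᵀ)
            + (γ ^ 2)⁻¹ • (G μ * (G μ)ᵀ)) * Xbar μ
        + (Kt μ)ᵀ * Rt μ * Kt μ
      = Xbar μ * (Y11 μ * Xbar μ) + (((C μ)ᵀ * C μ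
          + ((βbar μ)⁻¹ • (1 : Matrix (Fin n) (Fin n) ℝ) + σ • ((H μ)ᵀ * H μ)))
          + (∑ ν : {ν : Fin M // ν ≠ μ}, q μ ν.1 • Xbar ν.1)) := by
    have hcanc1 : ∀ Z : Matrix (Fin n) (Fin n) ℝ, Xbar μ * (X μ * Z) = Z := fun Z => by
      rw [← Matrix.mul_assoc, hXP μ, Matrix.one_mul]
    have hcanc3 : ∀ Z : Matrix (Fin m) (Fin n) ℝ, (Rt μ)⁻¹ * (Rt μ * Z) = Z := fun Z => by
      rw [← Matrix.mul_assoc, Matrix.nonsing_inv_mul _ hRdet, Matrix.one_mul]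
    rw [hY11, hKt, aux_sum_ne μ (fun ν => q μ ν • Xbar ν)]
    simp only [Matrix.transpose_add, Matrix.transpose_neg, Matrix.transpose_mul,
      Matrix.transpose_transpose, hXbsym, hRinvsym, Matrix.add_mul, Matrix.mul_add,
      Matrix.neg_mul, Matrix.mul_neg, Matrix.sub_mul, Matrix.mul_sub,
      smul_mul_assoc, mul_smul_comm, Matrix.mul_assoc, hPX μ, Matrix.mul_one,
      Matrix.one_mul, hcanc1, hcanc3]
    abel
  have hLinj : ∀ x : Fin n → ℝ, x ≠ 0 → L.mulVec x ≠ 0 := by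
    intro x hx h
    apply hx
    rw [hL, fromRows_mulVec] at h
    have h1' : Xbar μ *ᵥ x = 0 := funext fun i => congrFun h (Sum.inl i)
    calc x = (X μ * Xbar μ) *ᵥ x := by rw [hPX μ, one_mulVec]
      _ = X μ *ᵥ (Xbar μ *ᵥ x) := by rw [mulVec_mulVec]
      _ = 0 := by rw [h1', mulVec_zero]
  have hfin := aux_posdef_conj _ (hLMI μ) L hLinj
  have hkey : Lᵀ * (-(Matrix.fromBlocks (Y11 μ)
        (Matrix.fromCols (Y12 μ) (Y13 μ))
        (Matrix.fromRows (Y12 μ)ᵀ (Y13 μ)ᵀ)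
        (Matrix.fromBlocks (Y22 μ) 0 0 (Y33 μ)))) * L
      = -((A μ + B μ * Kt μ)ᵀ * Xbar μ + Xbar μ * (A μ + B μ * Kt μ)
        + (C μ)ᵀ * C μ + (βbar μ)⁻¹ • (1 : Matrix (Fin n) (Fin n) ℝ)
        + (∑ ν : Fin M, q μ ν • Xbar ν) + σ • ((H μ)ᵀ * H μ)
        + Xbar μ * (θbar • (E μ * (E μ)ᵀ) + τbar • (F μ * (F μ)ᵀ)
            + (γ ^ 2)⁻¹ • (G μ * (G μ)ᵀ)) * Xbar μ
        + (Kt μ)ᵀ * Rt μ * Kt μ) := by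
    rw [Matrix.mul_neg, Matrix.neg_mul, Matrix.mul_assoc, hLML, hRic]
  rwa [hkey] at hfin
end

section
/- Let ζ : ℝ → ℝ be continuous and let x : ℝ → ℝ be differentiable with x′(t) = −10·x(t) + 10·ζ(t) for all t ≥ 0. Then for every T ≥ 0, ∫₀ᵀ (ζ(t)² − x(t)²) dt ≥ −x(0)²/10. -/
/-- The local uncertainty dynamics `ẋ = −10x + 10ζ`, `ξ = x` satisfies the
integral quadratic constraint `∫₀ᵀ (ζ² − x²) ≥ −x(0)²/10`. -/
theorem stmt_12 (ζ x : ℝ → ℝ)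
    (hζ : Continuous ζ)
    (hx : ∀ t : ℝ, 0 ≤ t → HasDerivAt x (-10 * x t + 10 * ζ t) t) :
    ∀ T : ℝ, 0 ≤ T →
      (∫ t in (0 : ℝ)..T, (ζ t ^ 2 - x t ^ 2)) ≥ -(x 0 ^ 2) / 10 := by
  intro T hT
  have huIcc : Set.uIcc (0:ℝ) T = Set.Icc 0 T := Set.uIcc_of_le hT
  have hxc : ContinuousOn x (Set.Icc 0 T) := fun t ht =>
    (hx t ht.1).continuousAt.continuousWithinAt
  -- storage function derivative
  set g : ℝ → ℝ := fun t => x t * (-10 * x t + 10 * ζ t) / 5 with hg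
  have hgc : ContinuousOn g (Set.Icc 0 T) := by
    apply ContinuousOn.div_const
    exact hxc.mul (ContinuousOn.add (continuousOn_const.mul hxc)
      (continuousOn_const.mul (hζ.continuousOn)))
  have hgint : IntervalIntegrable g MeasureTheory.volume 0 T := by
    apply ContinuousOn.intervalIntegrable
    rwa [huIcc]
  have hftc : (∫ t in (0:ℝ)..T, g t) = x T ^ 2 / 10 - x 0 ^ 2 / 10 := by
    apply intervalIntegral.integral_eq_sub_of_hasDerivAt _ hgint
    intro t ht
    rw [huIcc] at ht
    have h := ((hx t ht.1).pow 2).div_const 10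
    convert h using 1
    · rfl
    · rfl
    rw [hg]; ring
  have hf : ∀ t, ζ t ^ 2 - x t ^ 2 = (ζ t - x t) ^ 2 + g t := by
    intro t; rw [hg]; ring
  have hfc : IntervalIntegrable (fun t => (ζ t - x t) ^ 2) MeasureTheory.volume 0 T := by
    apply ContinuousOn.intervalIntegrable
    rw [huIcc]
    exact ((hζ.continuousOn.sub hxc).pow 2)
  have hsplit : (∫ t in (0:ℝ)..T, (ζ t ^ 2 - x t ^ 2)) =
      (∫ t in (0:ℝ)..T, (ζ t - x t) ^ 2) + (∫ t in (0:ℝ)..T, g t) := by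
    rw [← intervalIntegral.integral_add hfc hgint]
    congr 1; funext t; exact hf t
  have hnn : 0 ≤ ∫ t in (0:ℝ)..T, (ζ t - x t) ^ 2 :=
    intervalIntegral.integral_nonneg hT (fun t _ => sq_nonneg _)
  rw [hsplit, hftc]
  have : 0 ≤ x T ^ 2 / 10 := by positivity
  have h0 : -(x 0 ^ 2) / 10 = -(x 0 ^ 2 / 10) := by ring
  rw [ge_iff_le, h0]
  linarith
end
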